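/- Let λ ∈ (0,1], r ∈ (0,1], and let F_{λ,r} be the rescaled Pareto distribution with cdf F_{λ,r}(x) = 1 − (1 + (x−1)/r)^{−1/λ} on [1,∞). Then for every integer n ≥ 2: (1) the expected second-highest of n i.i.d. draws from F_{λ,r} satisfies E[X_{n−1:n}] = 1 + r·(β_{n,λ} − 1); and (2) the optimal anonymous pricing revenue satisfies Price(F_{λ,r}, n) = sup_{q∈[0,1]} (1 + r·(q^{−λ} − 1))·(1 − (1−q)^n). -/

import Mathlib

open Real Set MeasureTheory

/-- `β_{n,λ} = n!·Γ(2−λ)/Γ(n+1−λ)`. -/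
noncomputable def betaCoef (n : ℕ) (lam : ℝ) : ℝ :=
  (n.factorial : ℝ) * Real.Gamma (2 - lam) / Real.Gamma ((n : ℝ) + 1 - lam)

/-- Cdf of the rescaled Pareto distribution `F_{λ,r}(x) = 1 − (1 + (x−1)/r)^{−1/λ}`,
supported on `[1,∞)`. -/
noncomputable def Fpar (lam r x : ℝ) : ℝ := 1 - (1 + (x - 1) / r) ^ (-(1 : ℝ) / lam)

/-- Density of the rescaled Pareto distribution:
`f_{λ,r}(x) = (1/(λr))·(1 + (x−1)/r)^{−1/λ−1}`. -/
noncomputable def fpar (lam r x : ℝ) : ℝ :=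
  (1 / (lam * r)) * (1 + (x - 1) / r) ^ (-(1 : ℝ) / lam - 1)

/-- The expected `k`-th lowest order statistic of `n` i.i.d. draws from the distribution
with cdf `F` and density `f` supported on `D`. -/
noncomputable def EOrd (F f : ℝ → ℝ) (D : Set ℝ) (k n : ℕ) : ℝ :=
  (k : ℝ) * (n.choose k : ℝ) *
    ∫ x in D, x * F x ^ (k - 1) * (1 - F x) ^ (n - k) * f x

lemma real_beta {a b : ℝ} (ha : 0 < a) (hb : 0 < b) :
    ∫ x in (0:ℝ)..1, x ^ (a - 1) * (1 - x) ^ (b - 1) =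
      Real.Gamma a * Real.Gamma b / Real.Gamma (a + b) := by
  have key : Complex.Gamma a * Complex.Gamma b =
      Complex.Gamma (a + b) * Complex.betaIntegral a b :=
    Complex.Gamma_mul_Gamma_eq_betaIntegral (by simpa using ha) (by simpa using hb)
  have hbeta : Complex.betaIntegral (a:ℂ) (b:ℂ) =
      ((∫ x in (0:ℝ)..1, x ^ (a - 1) * (1 - x) ^ (b - 1) : ℝ) : ℂ) := by
    rw [Complex.betaIntegral, ← intervalIntegral.integral_ofReal]
    refine intervalIntegral.integral_congr_ae ?_
    rw [Set.uIoc_of_le (by norm_num : (0:ℝ) ≤ 1)]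
    filter_upwards [] with x
    intro hx
    rw [show ((a:ℂ) - 1) = ((a - 1 : ℝ) : ℂ) by push_cast; ring,
      show ((b:ℂ) - 1) = ((b - 1 : ℝ) : ℂ) by push_cast; ring,
      show ((1:ℂ) - (x:ℂ)) = ((1 - x : ℝ) : ℂ) by push_cast; ring,
      ← Complex.ofReal_cpow hx.1.le,
      ← Complex.ofReal_cpow (by linarith [hx.2] : (0:ℝ) ≤ 1 - x)]
    push_cast
    ring
  have hG : Complex.Gamma ((a:ℂ) + b) = ((Real.Gamma (a + b) : ℝ) : ℂ) := by
    rw [← Complex.ofReal_add, Complex.Gamma_ofReal]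
  have hGa : Complex.Gamma (a:ℂ) = ((Real.Gamma a : ℝ) : ℂ) := Complex.Gamma_ofReal a
  have hGb : Complex.Gamma (b:ℂ) = ((Real.Gamma b : ℝ) : ℂ) := Complex.Gamma_ofReal b
  rw [hbeta, hG, hGa, hGb] at key
  have hne : Real.Gamma (a + b) ≠ 0 :=
    Real.Gamma_ne_zero (fun m => ne_of_gt (by have := Nat.cast_nonneg (α := ℝ) m; linarith))
  field_simp
  have := congrArg Complex.re key
  push_cast at this
  simpa [mul_comm] using this.symm

/-- Real Beta integral over `Ioo 0 1`. -/
lemma real_beta_Ioo {a b : ℝ} (ha : 0 < a) (hb : 0 < b) :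
    ∫ x in Set.Ioo (0:ℝ) 1, x ^ (a - 1) * (1 - x) ^ (b - 1) =
      Real.Gamma a * Real.Gamma b / Real.Gamma (a + b) := by
  rw [← MeasureTheory.integral_Ioc_eq_integral_Ioo,
    ← intervalIntegral.integral_of_le (by norm_num : (0:ℝ) ≤ 1)]
  exact real_beta ha hb

theorem rescaled_pareto_basic (lam r : ℝ) (hlam : lam ∈ Set.Ioc (0 : ℝ) 1)
    (hr : r ∈ Set.Ioc (0 : ℝ) 1) (n : ℕ) (hn : 2 ≤ n) :
    EOrd (Fpar lam r) (fpar lam r) (Set.Ici 1) (n - 1) n =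
      1 + r * (betaCoef n lam - 1) ∧
    sSup ((fun p => p * (1 - Fpar lam r p ^ n)) '' Set.Ici 1) =
      sSup ((fun q => (1 + r * (q ^ (-lam) - 1)) * (1 - (1 - q) ^ n)) ''
        Set.Ioc (0 : ℝ) 1) := by
  obtain ⟨hl0, hl1⟩ := hlam
  obtain ⟨hr0, hr1⟩ := hr
  have hlne : lam ≠ 0 := ne_of_gt hl0
  have hrne : r ≠ 0 := ne_of_gt hr0
  obtain ⟨m, rfl⟩ : ∃ m, n = m + 2 := ⟨n - 2, by omega⟩
  -- key rpow identities
  have key1 : ∀ u : ℝ, 0 < u → (u ^ (-lam)) ^ (-(1:ℝ) / lam) = u := by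
    intro u hu
    rw [← Real.rpow_mul hu.le, show (-lam) * (-(1:ℝ)/lam) = 1 by field_simp]
    exact Real.rpow_one u
  have key2 : ∀ t : ℝ, 0 ≤ t → (t ^ (-(1:ℝ) / lam)) ^ (-lam) = t := by
    intro t ht
    rw [← Real.rpow_mul ht, show (-(1:ℝ)/lam) * (-lam) = 1 by field_simp]
    exact Real.rpow_one t
  -- the inverse quantile map
  set φ : ℝ → ℝ := fun u => 1 + r * (u ^ (-lam) - 1) with hφ
  have hFφ : ∀ u : ℝ, 0 < u → Fpar lam r (φ u) = 1 - u := by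
    intro u hu
    have h1 : 1 + (φ u - 1) / r = u ^ (-lam) := by
      simp only [hφ]; field_simp; ring
    rw [Fpar, h1, key1 u hu]
  have hφmem : ∀ u ∈ Set.Ioo (0:ℝ) 1, φ u ∈ Set.Ioi (1:ℝ) := by
    intro u hu
    have h1 : (1:ℝ) < u ^ (-lam) := by
      have := Real.rpow_lt_rpow_of_neg hu.1 hu.2 (neg_lt_zero.mpr hl0)
      simpa using this
    have h2 : 0 < r * (u ^ (-lam) - 1) := by
      apply mul_pos hr0; linarith
    simp only [hφ, Set.mem_Ioi]; linarith
  -- inverse map facts: for p ≥ 1 the quantile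
  have hψ : ∀ p : ℝ, 1 < p →
      ∃ q ∈ Set.Ioo (0:ℝ) 1, φ q = p ∧ Fpar lam r p = 1 - q := by
    intro p hp
    have ht0 : (0:ℝ) < 1 + (p - 1) / r := by
      have : 0 < (p-1)/r := div_pos (by linarith) hr0
      linarith
    have ht1 : (1:ℝ) < 1 + (p - 1) / r := by
      have : 0 < (p-1)/r := div_pos (by linarith) hr0
      linarith
    refine ⟨(1 + (p - 1) / r) ^ (-(1:ℝ)/lam), ⟨Real.rpow_pos_of_pos ht0 _,
      Real.rpow_lt_one_of_one_lt_of_neg ht1 (by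
        rw [neg_div]; exact neg_lt_zero.mpr (by positivity))⟩, ?_, ?_⟩
    · simp only [hφ]
      rw [key2 _ ht0.le]
      field_simp
      ring
    · rfl
  have hψ' : ∀ p : ℝ, 1 ≤ p →
      ∃ q ∈ Set.Ioc (0:ℝ) 1, φ q = p ∧ Fpar lam r p = 1 - q := by
    intro p hp
    have ht0 : (0:ℝ) < 1 + (p - 1) / r := by
      have : 0 ≤ (p-1)/r := div_nonneg (by linarith) hr0.le
      linarith
    have ht1 : (1:ℝ) ≤ 1 + (p - 1) / r := by
      have : 0 ≤ (p-1)/r := div_nonneg (by linarith) hr0.le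
      linarith
    refine ⟨(1 + (p - 1) / r) ^ (-(1:ℝ)/lam), ⟨Real.rpow_pos_of_pos ht0 _,
      Real.rpow_le_one_of_one_le_of_nonpos ht1 (by
        rw [neg_div]; exact neg_nonpos.mpr (by positivity))⟩, ?_, ?_⟩
    · simp only [hφ]
      rw [key2 _ ht0.le]
      field_simp
      ring
    · rfl
  have himg : φ '' Set.Ioo 0 1 = Set.Ioi (1:ℝ) := by
    apply Set.Subset.antisymm
    · rintro _ ⟨u, hu, rfl⟩; exact hφmem u hu
    · rintro p hp
      obtain ⟨q, hq, hφq, _⟩ := hψ p hp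
      exact ⟨q, hq, hφq⟩
  have hderiv : ∀ u ∈ Set.Ioo (0:ℝ) 1,
      HasDerivWithinAt φ (-(r * lam * u ^ (-lam - 1))) (Set.Ioo 0 1) u := by
    intro u hu
    have h := Real.hasDerivAt_rpow_const (x := u) (p := -lam) (Or.inl hu.1.ne')
    have h2 : HasDerivAt φ (r * (-lam * u ^ (-lam - 1))) u := by
      simpa [hφ] using ((h.sub_const 1).const_mul r).const_add 1
    have h3 : HasDerivAt φ (-(r * lam * u ^ (-lam - 1))) u := by
      convert h2 using 1; ring
    exact h3.hasDerivWithinAt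
  have hinj : Set.InjOn φ (Set.Ioo 0 1) := by
    have : StrictAntiOn φ (Set.Ioo 0 1) := by
      intro a ha b hb hab
      have := Real.rpow_lt_rpow_of_neg ha.1 hab (neg_lt_zero.mpr hl0)
      simp only [hφ]
      nlinarith
    exact this.injOn
  have hfparφ : ∀ u : ℝ, 0 < u → fpar lam r (φ u) = (1 / (lam * r)) * u ^ (1 + lam) := by
    intro u hu
    have h1 : 1 + (φ u - 1) / r = u ^ (-lam) := by
      simp only [hφ]; field_simp; ring
    rw [fpar, h1, ← Real.rpow_mul hu.le,
      show (-lam) * (-(1:ℝ)/lam - 1) = 1 + lam by field_simp; ring]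
  constructor
  · -- Part 1
    set g : ℝ → ℝ :=
      fun x => x * Fpar lam r x ^ m * (1 - Fpar lam r x) ^ 1 * fpar lam r x with hg
    have hCOV : (∫ x in Set.Ici (1:ℝ), g x)
        = ∫ u in Set.Ioo (0:ℝ) 1, |(-(r * lam * u ^ (-lam - 1)))| • g (φ u) := by
      rw [MeasureTheory.integral_Ici_eq_integral_Ioi, ← himg]
      exact integral_image_eq_integral_abs_deriv_smul measurableSet_Ioo hderiv hinj g
    have hpt : ∀ u ∈ Set.Ioo (0:ℝ) 1,
        |(-(r * lam * u ^ (-lam - 1)))| • g (φ u)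
          = (1 - r) * (u ^ ((2:ℝ) - 1) * (1 - u) ^ (((m:ℝ) + 1) - 1))
            + r * (u ^ ((2 - lam) - 1) * (1 - u) ^ (((m:ℝ) + 1) - 1)) := by
      intro u hu
      have ha : u ^ (-lam - 1) * u ^ (1 + lam) = 1 := by
        rw [← Real.rpow_add hu.1, show (-lam - 1) + (1 + lam) = 0 by ring, Real.rpow_zero]
      have hb : u ^ (-lam) * u = u ^ (1 - lam) := by
        nth_rewrite 2 [← Real.rpow_one u]
        rw [← Real.rpow_add hu.1]; ring_nf
      have hc : (1 - u) ^ (((m:ℝ) + 1) - 1) = (1 - u) ^ m := by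
        rw [show ((m:ℝ) + 1) - 1 = ((m:ℕ):ℝ) by ring, Real.rpow_natCast]
      have hd : u ^ ((2:ℝ) - 1) = u := by norm_num
      have he : u ^ ((2 - lam) - 1) = u ^ (1 - lam) := by
        rw [show (2 - lam) - 1 = 1 - lam by ring]
      rw [smul_eq_mul, abs_neg, abs_of_pos
        (mul_pos (mul_pos hr0 hl0) (Real.rpow_pos_of_pos hu.1 _))]
      rw [hg]
      simp only
      rw [hFφ u hu.1, hfparφ u hu.1, hc, hd, he]
      simp only [hφ]
      rw [show (1:ℝ) - (1 - u) = u by ring, pow_one]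
      have hlr : 1 / (lam * r) * (r * lam) = 1 := by
        rw [div_mul_eq_mul_div, one_mul, mul_comm r lam, div_self (mul_ne_zero hlne hrne)]
      linear_combination ((1 + r * (u ^ (-lam) - 1)) * (1 - u) ^ m * u) * hlr
        + (r * lam * (1 / (lam * r)) * (1 + r * (u ^ (-lam) - 1)) * (1 - u) ^ m * u) * ha
        + (r * (1 - u) ^ m) * hb
    have hIb : ∀ a : ℝ, 1 ≤ a → IntegrableOn
        (fun x : ℝ => x ^ (a - 1) * (1 - x) ^ (((m:ℝ) + 1) - 1)) (Set.Ioo 0 1) := by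
      intro a haa
      apply MeasureTheory.Measure.integrableOn_of_bounded (M := 1)
      · exact ne_of_lt measure_Ioo_lt_top
      · apply Measurable.aestronglyMeasurable
        fun_prop
      · filter_upwards [ae_restrict_mem measurableSet_Ioo] with x hx
        rw [Real.norm_eq_abs, abs_of_nonneg (mul_nonneg (Real.rpow_nonneg hx.1.le _)
          (Real.rpow_nonneg (by linarith [hx.2]) _))]
        have h1 : x ^ (a - 1) ≤ 1 :=
          Real.rpow_le_one hx.1.le (by linarith [hx.2]) (by linarith)
        have h2 : (1 - x) ^ (((m:ℝ) + 1) - 1) ≤ 1 :=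
          Real.rpow_le_one (by linarith [hx.2]) (by linarith [hx.1]) (by linarith)
        nlinarith [Real.rpow_nonneg hx.1.le (a - 1)]
    have hval : (∫ x in Set.Ici (1:ℝ), g x)
        = (1 - r) * (Real.Gamma 2 * Real.Gamma ((m:ℝ) + 1) / Real.Gamma (2 + ((m:ℝ) + 1)))
          + r * (Real.Gamma (2 - lam) * Real.Gamma ((m:ℝ) + 1)
              / Real.Gamma ((2 - lam) + ((m:ℝ) + 1))) := by
      rw [hCOV, MeasureTheory.setIntegral_congr_fun measurableSet_Ioo hpt]
      rw [MeasureTheory.integral_add ((hIb 2 (by norm_num)).const_mul (1 - r))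
        ((hIb (2 - lam) (by linarith)).const_mul r)]
      rw [integral_const_mul, integral_const_mul]
      rw [real_beta_Ioo (by norm_num) (by positivity),
        real_beta_Ioo (by linarith) (by positivity)]
    -- assemble part 1
    rw [EOrd]
    have hexp1 : m + 2 - 1 - 1 = m := by omega
    have hexp2 : m + 2 - (m + 2 - 1) = 1 := by omega
    have hch : (m + 2).choose (m + 2 - 1) = m + 2 := by
      rw [show m + 2 - 1 = (m+2) - 1 from rfl, Nat.choose_symm (by omega), Nat.choose_one_right]
    rw [hexp1, hexp2, hch]
    have : (∫ x in Set.Ici (1:ℝ),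
        x * Fpar lam r x ^ m * (1 - Fpar lam r x) ^ 1 * fpar lam r x) = ∫ x in Set.Ici (1:ℝ), g x := rfl
    rw [this, hval]
    rw [Real.Gamma_two,
      show (2:ℝ) + ((m:ℝ) + 1) = ((m + 2 : ℕ) : ℝ) + 1 by push_cast; ring,
      show (2 - lam) + ((m:ℝ) + 1) = ((m + 2 : ℕ) : ℝ) + 1 - lam by push_cast; ring,
      Real.Gamma_nat_eq_factorial, Real.Gamma_nat_eq_factorial, betaCoef]
    have hfac : ((m + 2).factorial : ℝ) = ((m:ℝ) + 2) * ((m:ℝ) + 1) * (m.factorial : ℝ) := by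
      rw [show m + 2 = (m+1) + 1 from rfl, Nat.factorial_succ, Nat.factorial_succ]
      push_cast; ring
    have hGne : Real.Gamma (((m + 2 : ℕ) : ℝ) + 1 - lam) ≠ 0 := by
      apply ne_of_gt
      apply Real.Gamma_pos_of_pos
      push_cast; linarith
    have hfacne : ((m + 2).factorial : ℝ) ≠ 0 := by positivity
    have hmfacne : ((m).factorial : ℝ) ≠ 0 := by positivity
    rw [show ((m + 2 - 1 : ℕ):ℝ) = (m:ℝ) + 1 by push_cast [show m + 2 - 1 = m + 1 from rfl]; ring]
    push_cast
    rw [hfac]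
    field_simp
    ring
  · -- Part 2
    have himg2 : (fun p => p * (1 - Fpar lam r p ^ (m + 2))) '' Set.Ici 1 =
        (fun q => (1 + r * (q ^ (-lam) - 1)) * (1 - (1 - q) ^ (m + 2))) '' Set.Ioc (0:ℝ) 1 := by
      ext y
      simp only [Set.mem_image]
      constructor
      · rintro ⟨p, hp, rfl⟩
        obtain ⟨q, hq, hφq, hFq⟩ := hψ' p hp
        refine ⟨q, hq, ?_⟩
        rw [show (1:ℝ) - q = Fpar lam r p by rw [hFq], show 1 + r * (q ^ (-lam) - 1) = φ q from rfl, hφq]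
      · rintro ⟨q, hq, rfl⟩
        have h1 : (1:ℝ) ≤ q ^ (-lam) :=
          Real.one_le_rpow_of_pos_of_le_one_of_nonpos hq.1 hq.2 (neg_nonpos.mpr hl0.le)
        refine ⟨φ q, ?_, ?_⟩
        · simp only [hφ, Set.mem_Ici]
          nlinarith
        · rw [hFφ q hq.1, show (1:ℝ) + r * (q ^ (-lam) - 1) = φ q from rfl]
    rw [himg2]
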